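/- A generic arrangement of k ≤ n affine hyperplanes in ℝⁿ has exactly 2^k regions (connected components of the complement), and these regions are in one-to-one correspondence with binary k-tuples recording on which side of each co-oriented hyperplane the region lies. -/

import Mathlib

open Matrix

/-- A generic arrangement of `k ≤ n` co-oriented affine hyperplanes in `ℝⁿ`
has exactly `2^k` regions, in one-to-one correspondence with binary `k`-tuples recording
the side of each hyperplane: every sign pattern `θ` occurs as a nonempty region `R θ`,
each `R θ` is a connected component of the complement, every point of the complement lies
in some `R θ`, the labeling is injective, and there are `2^k` regions. -/
theorem generic_arrangement_regions {n k : ℕ} (hkn : k ≤ n)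
    (w : Fin k → (Fin n → ℝ)) (b : Fin k → ℝ) (hw : ∀ i, w i ≠ 0)
    (hgen : ∀ s : Finset (Fin k), ∃ E : AffineSubspace ℝ (Fin n → ℝ),
      (E : Set (Fin n → ℝ)) = ⋂ i ∈ s, {x : Fin n → ℝ | w i ⬝ᵥ x + b i = 0} ∧
      (E : Set (Fin n → ℝ)).Nonempty ∧
      Module.finrank ℝ E.direction = n - s.card)
    (comp : Set (Fin n → ℝ)) (hcomp : comp = {x | ∀ i, w i ⬝ᵥ x + b i ≠ 0})
    (R : (Fin k → Bool) → Set (Fin n → ℝ))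
    (hR : ∀ θ, R θ = {x | ∀ i, if θ i then 0 < w i ⬝ᵥ x + b i else w i ⬝ᵥ x + b i < 0}) :
    (∀ θ, (R θ).Nonempty) ∧
    (∀ θ, ∀ x ∈ R θ, connectedComponentIn comp x = R θ) ∧
    (∀ x ∈ comp, ∃ θ, x ∈ R θ) ∧
    Function.Injective R ∧
    {C : Set (Fin n → ℝ) | ∃ x ∈ comp, C = connectedComponentIn comp x}.ncard = 2 ^ k := by
  -- continuity of the affine functionals
  have hcont : ∀ i : Fin k, Continuous fun x : Fin n → ℝ => w i ⬝ᵥ x + b i := by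
    intro i
    have : Continuous fun x : Fin n → ℝ => (∑ j, w i j * x j) + b i :=
      (continuous_finset_sum _ fun j _ => continuous_const.mul (continuous_apply j)).add continuous_const
    simpa [dotProduct] using this
  -- linearity of the dot products
  have islin : ∀ i : Fin k, IsLinearMap ℝ (fun x : Fin n → ℝ => w i ⬝ᵥ x) := by
    intro i
    exact ⟨fun x y => dotProduct_add _ _ _, fun c x => by simp [dotProduct, Finset.mul_sum, mul_comm, mul_left_comm]⟩
  -- regions are open
  have hopen : ∀ θ, IsOpen (R θ) := by
    intro θ
    rw [hR]
    have hEq : {x : Fin n → ℝ | ∀ i, if θ i then 0 < w i ⬝ᵥ x + b i else w i ⬝ᵥ x + b i < 0}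
        = ⋂ i, {x : Fin n → ℝ | if θ i then 0 < w i ⬝ᵥ x + b i else w i ⬝ᵥ x + b i < 0} := by
      ext x; simp [Set.mem_iInter]
    rw [hEq]
    refine isOpen_iInter_of_finite fun i => ?_
    by_cases h : θ i = true
    · simp only [if_pos h]
      exact isOpen_lt continuous_const (hcont i)
    · simp only [if_neg h]
      exact isOpen_lt (hcont i) continuous_const
  -- regions are convex
  have hconv : ∀ θ, Convex ℝ (R θ) := by
    intro θ
    rw [hR]
    have hEq : {x : Fin n → ℝ | ∀ i, if θ i then 0 < w i ⬝ᵥ x + b i else w i ⬝ᵥ x + b i < 0}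
        = ⋂ i, {x : Fin n → ℝ | if θ i then 0 < w i ⬝ᵥ x + b i else w i ⬝ᵥ x + b i < 0} := by
      ext x; simp [Set.mem_iInter]
    rw [hEq]
    refine convex_iInter fun i => ?_
    by_cases h : θ i = true
    · simp only [if_pos h]
      have := convex_halfSpace_gt (islin i) (-(b i))
      convert this using 1
      · rfl
      ext x; constructor <;> intro hx <;> simp only [Set.mem_setOf_eq] at * <;> linarith
    · simp only [if_neg h]
      have := convex_halfSpace_lt (islin i) (-(b i))
      convert this using 1
      · rfl
      ext x; constructor <;> intro hx <;> simp only [Set.mem_setOf_eq] at * <;> linarith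
  -- regions are contained in the complement
  have hsub : ∀ θ, R θ ⊆ comp := by
    intro θ x hx
    rw [hR] at hx
    rw [hcomp]
    intro i
    have := hx i
    by_cases h : θ i = true
    · rw [if_pos h] at this; intro hc; linarith
    · rw [if_neg h] at this; intro hc; linarith
  -- two regions containing a common point have equal sign patterns
  have hsep : ∀ θ θ' (x : Fin n → ℝ), x ∈ R θ → x ∈ R θ' → θ = θ' := by
    intro θ θ' x h1 h2
    rw [hR] at h1 h2
    funext i
    have a1 := h1 i; have a2 := h2 i
    by_cases hb1 : θ i = true <;> by_cases hb2 : θ' i = true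
    · rw [hb1, hb2]
    · rw [if_pos hb1] at a1; rw [if_neg hb2] at a2; linarith
    · rw [if_neg hb1] at a1; rw [if_pos hb2] at a2; linarith
    · rw [Bool.not_eq_true] at hb1 hb2; rw [hb1, hb2]
  -- every point of the complement lies in some region
  have hcover : ∀ x ∈ comp, ∃ θ, x ∈ R θ := by
    intro x hx
    rw [hcomp] at hx
    refine ⟨fun i => decide (0 < w i ⬝ᵥ x + b i), ?_⟩
    rw [hR]
    intro i
    by_cases h : 0 < w i ⬝ᵥ x + b i
    · simp [h]
    · have hne := hx i
      have : w i ⬝ᵥ x + b i < 0 := lt_of_le_of_ne (not_lt.mp h) hne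
      simp [h, this]
  -- nonemptiness of every region, via genericity
  obtain ⟨E, hEset, ⟨p, hp⟩, hEdim⟩ := hgen Finset.univ
  have hp0 : ∀ i, w i ⬝ᵥ p + b i = 0 := by
    intro i
    have hp' : p ∈ (E : Set (Fin n → ℝ)) := hp
    rw [hEset] at hp'
    simp only [Set.mem_iInter, Set.mem_setOf_eq] at hp'
    exact hp' i (Finset.mem_univ i)
  set L : (Fin n → ℝ) →ₗ[ℝ] (Fin k → ℝ) := Matrix.mulVecLin (Matrix.of w) with hLdef
  have hL : ∀ (v : Fin n → ℝ) (i : Fin k), L v i = w i ⬝ᵥ v := fun v i => rfl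
  have hker : E.direction = LinearMap.ker L := by
    ext v
    rw [LinearMap.mem_ker]
    constructor
    · intro hv
      have hv' : v ∈ ((fun x => x -ᵥ p) '' (E : Set (Fin n → ℝ))) := by
        rw [← AffineSubspace.coe_direction_eq_vsub_set_right hp]
        exact hv
      obtain ⟨y, hy, rfl⟩ := hv'
      have hy' : ∀ i, w i ⬝ᵥ y + b i = 0 := by
        intro i
        rw [hEset] at hy
        simp only [Set.mem_iInter, Set.mem_setOf_eq] at hy
        exact hy i (Finset.mem_univ i)
      funext i
      have h1 := hy' i; have h2 := hp0 i
      show w i ⬝ᵥ (y - p) = 0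
      rw [dotProduct_sub]
      linarith
    · intro hv
      have hmem : p + v ∈ (E : Set (Fin n → ℝ)) := by
        rw [hEset]
        simp only [Set.mem_iInter, Set.mem_setOf_eq]
        intro i _
        have h1 : w i ⬝ᵥ v = 0 := by rw [← hL v i, hv]; rfl
        rw [dotProduct_add]
        have := hp0 i
        linarith
      have := AffineSubspace.vsub_mem_direction hmem hp
      simpa using this
  rw [hker] at hEdim
  simp only [Finset.card_univ, Fintype.card_fin] at hEdim
  have hrange : Module.finrank ℝ (LinearMap.range L) = k := by
    have h1 := LinearMap.finrank_range_add_finrank_ker L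
    rw [hEdim, Module.finrank_fin_fun] at h1
    omega
  have hsurj : ∀ t : Fin k → ℝ, ∃ v, L v = t := by
    have htop : LinearMap.range L = ⊤ := by
      apply Submodule.eq_top_of_finrank_eq
      rw [hrange, Module.finrank_fin_fun]
    intro t
    have : t ∈ LinearMap.range L := by rw [htop]; trivial
    exact this
  have hne : ∀ θ, (R θ).Nonempty := by
    intro θ
    obtain ⟨v, hv⟩ := hsurj (fun i => if θ i then 1 else -1)
    refine ⟨p + v, ?_⟩
    rw [hR]
    intro i
    have hvi : w i ⬝ᵥ v = (if θ i then (1:ℝ) else -1) := by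
      rw [← hL v i, hv]
    have hpi := hp0 i
    have : w i ⬝ᵥ (p + v) + b i = (if θ i then (1:ℝ) else -1) := by
      rw [dotProduct_add]; rw [hvi]; linarith
    by_cases h : θ i = true
    · rw [if_pos h] at this ⊢; rw [this]; norm_num
    · rw [if_neg h] at this ⊢; rw [this]; norm_num
  -- components
  have hcompeq : ∀ θ, ∀ x ∈ R θ, connectedComponentIn comp x = R θ := by
    intro θ x hx
    apply Set.Subset.antisymm
    · have hpre := isPreconnected_connectedComponentIn (F := comp) (x := x)
      have hsubc := connectedComponentIn_subset comp x
      have hxc : x ∈ connectedComponentIn comp x := mem_connectedComponentIn (hsub θ hx)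
      have hVopen : IsOpen (⋃ θ' : {θ' : Fin k → Bool // θ' ≠ θ}, R θ'.val) :=
        isOpen_iUnion fun θ' => hopen θ'.val
      refine hpre.subset_left_of_subset_union (hopen θ) hVopen ?_ ?_ ⟨x, hxc, hx⟩
      · rw [Set.disjoint_left]
        rintro y hy hy'
        simp only [Set.mem_iUnion] at hy'
        obtain ⟨⟨θ', hθ'⟩, hyθ'⟩ := hy'
        exact hθ' (hsep θ' θ y hyθ' hy)
      · intro y hy
        obtain ⟨θ', hθ'⟩ := hcover y (hsubc hy)
        by_cases h : θ' = θ
        · exact Or.inl (h ▸ hθ')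
        · exact Or.inr (Set.mem_iUnion.mpr ⟨⟨θ', h⟩, hθ'⟩)
    · exact (hconv θ).isPreconnected.subset_connectedComponentIn hx (hsub θ)
  have hinj : Function.Injective R := by
    intro θ θ' h
    obtain ⟨x, hx⟩ := hne θ
    exact hsep θ θ' x hx (h ▸ hx)
  refine ⟨hne, hcompeq, hcover, hinj, ?_⟩
  have hset : {C : Set (Fin n → ℝ) | ∃ x ∈ comp, C = connectedComponentIn comp x} = Set.range R := by
    ext C
    constructor
    · rintro ⟨x, hx, rfl⟩
      obtain ⟨θ, hθ⟩ := hcover x hx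
      exact ⟨θ, (hcompeq θ x hθ).symm⟩
    · rintro ⟨θ, rfl⟩
      obtain ⟨x, hx⟩ := hne θ
      exact ⟨x, hsub θ hx, (hcompeq θ x hx).symm⟩
  rw [hset]
  have : (Set.range R).ncard = Nat.card (Fin k → Bool) := by
    rw [← Nat.card_coe_set_eq]
    exact Nat.card_congr (Equiv.ofInjective R hinj).symm
  rw [this]
  simp [Nat.card_eq_fintype_card]
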